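/- The subgroup of GL₇(ℚ) generated by P_α, P_β and N₁ has order 168, the set E = {I, N₁,…,N₇} is a normal subgroup of it of order 8; in particular this group of order 168 is not simple (hence is not isomorphic to PSL₂(7)). -/

import Mathlib

open Matrix Equiv

/-- `PSL₂(7)`: the quotient of `SL(2, ℤ/7ℤ)` by its center. -/
abbrev PSL₂7 : Type :=
  Matrix.SpecialLinearGroup (Fin 2) (ZMod 7) ⧸
    Subgroup.center (Matrix.SpecialLinearGroup (Fin 2) (ZMod 7))

/-- The permutation matrix of `σ` (sending the basis vector `eⱼ` to `e_{σ j}`),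
as an element of `GL₇(ℚ)`.  (We index the basis `e₁, …, e₇` of the paper by `Fin 7`,
so `e_{i+1}` corresponds to index `i`.) -/
def permGL (σ : Equiv.Perm (Fin 7)) : GL (Fin 7) ℚ :=
  ⟨(σ⁻¹).permMatrix ℚ, σ.permMatrix ℚ,
    by rw [← PEquiv.toMatrix_trans, ← Equiv.toPEquiv_trans]
       simp [Equiv.Perm.inv_def, Equiv.toPEquiv_refl],
    by rw [← PEquiv.toMatrix_trans, ← Equiv.toPEquiv_trans]
       simp [Equiv.Perm.inv_def, Equiv.toPEquiv_refl]⟩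

theorem diag_mul_self (v : Fin 7 → ℚ) (h : ∀ i, v i * v i = 1) :
    Matrix.diagonal v * Matrix.diagonal v = 1 := by
  rw [Matrix.diagonal_mul_diagonal]
  have hv : (fun i => v i * v i) = fun _ => (1 : ℚ) := funext h
  rw [hv]
  exact Matrix.diagonal_one

/-- A diagonal `±1` matrix as an element of `GL₇(ℚ)`. -/
def diagGL (v : Fin 7 → ℚ) (h : ∀ i, v i * v i = 1) : GL (Fin 7) ℚ :=
  ⟨Matrix.diagonal v, Matrix.diagonal v, diag_mul_self v h, diag_mul_self v h⟩

/-- `α`, the 7-cycle `(1 2 4 3 6 5 7)` of the paper, written 0-indexed on `Fin 7`. -/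
def α : Equiv.Perm (Fin 7) := c[0, 1, 3, 2, 5, 4, 6]

/-- `β = (2 4 6)(3 7 5)` of the paper, written 0-indexed on `Fin 7`. -/
def β : Equiv.Perm (Fin 7) := c[1, 3, 5] * c[2, 6, 4]

def N₁ : GL (Fin 7) ℚ :=
  diagGL ![1, 1, 1, -1, -1, -1, -1] (by intro i; fin_cases i <;> norm_num [Matrix.cons_val_succ])

def N₂ : GL (Fin 7) ℚ :=
  diagGL ![1, -1, -1, 1, -1, -1, 1] (by intro i; fin_cases i <;> norm_num [Matrix.cons_val_succ])

def N₇ : GL (Fin 7) ℚ :=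
  diagGL ![-1, 1, -1, 1, -1, 1, -1] (by intro i; fin_cases i <;> norm_num [Matrix.cons_val_succ])

def N₃ : GL (Fin 7) ℚ := N₁ * N₂
def N₄ : GL (Fin 7) ℚ := N₁ * N₇
def N₅ : GL (Fin 7) ℚ := N₂ * N₇
def N₆ : GL (Fin 7) ℚ := N₁ * N₂ * N₇

/-- The set `E = {I, N₁, …, N₇}`. -/
def Eset : Set (GL (Fin 7) ℚ) := {1, N₁, N₂, N₃, N₄, N₅, N₆, N₇}

/-- The group `2³:7:3 = ⟨P_α, P_β, N₁⟩`. -/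
def G3 : Subgroup (GL (Fin 7) ℚ) := Subgroup.closure {permGL α, permGL β, N₁}

structure M7 : Type where
  p : Fin 7 → Fin 7
  s : Fin 7 → Bool

instance : DecidableEq M7 := fun x y =>
  decidable_of_iff (x.p = y.p ∧ x.s = y.s) (by cases x; cases y; simp)

instance : Monoid M7 where
  mul x y := ⟨x.p ∘ y.p, fun i => xor (y.s i) (x.s (y.p i))⟩
  one := ⟨id, fun _ => false⟩
  mul_assoc x y z := by
    show (⟨_, _⟩ : M7) = ⟨_, _⟩
    refine congrArg₂ M7.mk rfl ?_
    funext i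
    exact (Bool.xor_assoc _ _ _).symm
  one_mul x := by
    show (⟨_, _⟩ : M7) = x
    cases x with
    | mk p s => refine congrArg₂ M7.mk rfl ?_; funext i; exact Bool.xor_false _
  mul_one x := by
    show (⟨_, _⟩ : M7) = x
    cases x with
    | mk p s => refine congrArg₂ M7.mk rfl ?_; funext i; exact Bool.false_xor _

lemma M7.mul_def (x y : M7) :
    x * y = ⟨x.p ∘ y.p, fun i => xor (y.s i) (x.s (y.p i))⟩ := rfl
lemma M7.one_def : (1 : M7) = ⟨id, fun _ => false⟩ := rfl

def sgn (b : Bool) : ℚ := if b then -1 else 1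

def mmat (x : M7) : Matrix (Fin 7) (Fin 7) ℚ :=
  Matrix.of fun i j => if x.p j = i then sgn (x.s j) else 0

lemma mmat_apply (x : M7) (i j : Fin 7) :
    mmat x i j = if x.p j = i then sgn (x.s j) else 0 := rfl

lemma mmat_one : mmat 1 = 1 := by
  ext i j
  simp only [mmat_apply, M7.one_def, Matrix.one_apply, id_eq, sgn]
  by_cases h : j = i
  · simp [h]
  · simp [h, Ne.symm h]

lemma sgn_xor (a b : Bool) : sgn (xor a b) = sgn a * sgn b := by
  cases a <;> cases b <;> norm_num [sgn]

lemma mmat_mul (x y : M7) : mmat (x * y) = mmat x * mmat y := by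
  ext i j
  rw [Matrix.mul_apply]
  rw [Finset.sum_eq_single (y.p j)]
  · simp only [mmat_apply, M7.mul_def, Function.comp]
    by_cases h : x.p (y.p j) = i <;> simp [h, sgn_xor, mul_comm]
  · intro k _ hk
    simp [mmat_apply, Ne.symm hk]
  · intro h
    exact absurd (Finset.mem_univ _) h

def mhom : M7 →* Matrix (Fin 7) (Fin 7) ℚ :=
  { toFun := mmat, map_one' := mmat_one, map_mul' := mmat_mul }

def ψ : M7ˣ →* GL (Fin 7) ℚ := Units.map mhom

lemma sgn_ne_zero (b : Bool) : sgn b ≠ 0 := by cases b <;> norm_num [sgn]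

lemma mmat_injective : Function.Injective mmat := by
  intro x y h
  have key : ∀ j, x.p j = y.p j ∧ x.s j = y.s j := by
    intro j
    have h1 : mmat x (x.p j) j = mmat y (x.p j) j := by rw [h]
    rw [mmat_apply, mmat_apply, if_pos rfl] at h1
    by_cases hy : y.p j = x.p j
    · rw [if_pos hy] at h1
      refine ⟨hy.symm, ?_⟩
      cases hb : x.s j <;> cases hb' : y.s j <;> simp_all [sgn] <;> norm_num at h1
    · rw [if_neg hy] at h1
      exact absurd h1 (sgn_ne_zero _)
  cases x; cases y
  exact congrArg₂ M7.mk (funext fun j => (key j).1) (funext fun j => (key j).2)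

lemma ψ_injective : Function.Injective ψ := by
  intro u v h
  have h2 : mmat u.val = mmat v.val := congrArg Units.val h
  exact Units.ext (mmat_injective h2)

def L1 : List M7 := [
  ⟨![0,1,2,3,4,5,6], ![false,false,false,false,false,false,false]⟩,
  ⟨![0,1,2,3,4,5,6], ![false,false,false,true,true,true,true]⟩,
  ⟨![0,1,2,3,4,5,6], ![false,true,true,false,true,true,false]⟩,
  ⟨![0,1,2,3,4,5,6], ![false,true,true,true,false,false,true]⟩,
  ⟨![0,1,2,3,4,5,6], ![true,false,true,false,true,false,true]⟩,
  ⟨![0,1,2,3,4,5,6], ![true,false,true,true,false,true,false]⟩,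
  ⟨![0,1,2,3,4,5,6], ![true,true,false,false,false,true,true]⟩,
  ⟨![0,1,2,3,4,5,6], ![true,true,false,true,true,false,false]⟩,
  ⟨![0,3,6,5,2,1,4], ![false,false,false,false,false,false,false]⟩,
  ⟨![0,3,6,5,2,1,4], ![false,false,false,true,true,true,true]⟩,
  ⟨![0,3,6,5,2,1,4], ![false,true,true,false,true,true,false]⟩,
  ⟨![0,3,6,5,2,1,4], ![false,true,true,true,false,false,true]⟩,
  ⟨![0,3,6,5,2,1,4], ![true,false,true,false,true,false,true]⟩,
  ⟨![0,3,6,5,2,1,4], ![true,false,true,true,false,true,false]⟩,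
  ⟨![0,3,6,5,2,1,4], ![true,true,false,false,false,true,true]⟩,
  ⟨![0,3,6,5,2,1,4], ![true,true,false,true,true,false,false]⟩,
  ⟨![0,5,4,1,6,3,2], ![false,false,false,false,false,false,false]⟩,
  ⟨![0,5,4,1,6,3,2], ![false,false,false,true,true,true,true]⟩,
  ⟨![0,5,4,1,6,3,2], ![false,true,true,false,true,true,false]⟩,
  ⟨![0,5,4,1,6,3,2], ![false,true,true,true,false,false,true]⟩,
  ⟨![0,5,4,1,6,3,2], ![true,false,true,false,true,false,true]⟩,
  ⟨![0,5,4,1,6,3,2], ![true,false,true,true,false,true,false]⟩,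
  ⟨![0,5,4,1,6,3,2], ![true,true,false,false,false,true,true]⟩,
  ⟨![0,5,4,1,6,3,2], ![true,true,false,true,true,false,false]⟩,
  ⟨![1,2,0,4,5,3,6], ![false,false,false,false,false,false,false]⟩,
  ⟨![1,2,0,4,5,3,6], ![false,false,false,true,true,true,true]⟩,
  ⟨![1,2,0,4,5,3,6], ![false,true,true,false,true,true,false]⟩,
  ⟨![1,2,0,4,5,3,6], ![false,true,true,true,false,false,true]⟩,
  ⟨![1,2,0,4,5,3,6], ![true,false,true,false,true,false,true]⟩,
  ⟨![1,2,0,4,5,3,6], ![true,false,true,true,false,true,false]⟩,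
  ⟨![1,2,0,4,5,3,6], ![true,true,false,false,false,true,true]⟩,
  ⟨![1,2,0,4,5,3,6], ![true,true,false,true,true,false,false]⟩,
  ⟨![1,3,5,2,6,4,0], ![false,false,false,false,false,false,false]⟩,
  ⟨![1,3,5,2,6,4,0], ![false,false,false,true,true,true,true]⟩,
  ⟨![1,3,5,2,6,4,0], ![false,true,true,false,true,true,false]⟩,
  ⟨![1,3,5,2,6,4,0], ![false,true,true,true,false,false,true]⟩,
  ⟨![1,3,5,2,6,4,0], ![true,false,true,false,true,false,true]⟩,
  ⟨![1,3,5,2,6,4,0], ![true,false,true,true,false,true,false]⟩,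
  ⟨![1,3,5,2,6,4,0], ![true,true,false,false,false,true,true]⟩,
  ⟨![1,3,5,2,6,4,0], ![true,true,false,true,true,false,false]⟩,
  ⟨![1,4,6,3,0,2,5], ![false,false,false,false,false,false,false]⟩,
  ⟨![1,4,6,3,0,2,5], ![false,false,false,true,true,true,true]⟩]

def L2 : List M7 := [
  ⟨![1,4,6,3,0,2,5], ![false,true,true,false,true,true,false]⟩,
  ⟨![1,4,6,3,0,2,5], ![false,true,true,true,false,false,true]⟩,
  ⟨![1,4,6,3,0,2,5], ![true,false,true,false,true,false,true]⟩,
  ⟨![1,4,6,3,0,2,5], ![true,false,true,true,false,true,false]⟩,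
  ⟨![1,4,6,3,0,2,5], ![true,true,false,false,false,true,true]⟩,
  ⟨![1,4,6,3,0,2,5], ![true,true,false,true,true,false,false]⟩,
  ⟨![2,0,1,5,3,4,6], ![false,false,false,false,false,false,false]⟩,
  ⟨![2,0,1,5,3,4,6], ![false,false,false,true,true,true,true]⟩,
  ⟨![2,0,1,5,3,4,6], ![false,true,true,false,true,true,false]⟩,
  ⟨![2,0,1,5,3,4,6], ![false,true,true,true,false,false,true]⟩,
  ⟨![2,0,1,5,3,4,6], ![true,false,true,false,true,false,true]⟩,
  ⟨![2,0,1,5,3,4,6], ![true,false,true,true,false,true,false]⟩,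
  ⟨![2,0,1,5,3,4,6], ![true,true,false,false,false,true,true]⟩,
  ⟨![2,0,1,5,3,4,6], ![true,true,false,true,true,false,false]⟩,
  ⟨![2,4,3,0,6,5,1], ![false,false,false,false,false,false,false]⟩,
  ⟨![2,4,3,0,6,5,1], ![false,false,false,true,true,true,true]⟩,
  ⟨![2,4,3,0,6,5,1], ![false,true,true,false,true,true,false]⟩,
  ⟨![2,4,3,0,6,5,1], ![false,true,true,true,false,false,true]⟩,
  ⟨![2,4,3,0,6,5,1], ![true,false,true,false,true,false,true]⟩,
  ⟨![2,4,3,0,6,5,1], ![true,false,true,true,false,true,false]⟩,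
  ⟨![2,4,3,0,6,5,1], ![true,true,false,false,false,true,true]⟩,
  ⟨![2,4,3,0,6,5,1], ![true,true,false,true,true,false,false]⟩,
  ⟨![2,5,6,4,1,0,3], ![false,false,false,false,false,false,false]⟩,
  ⟨![2,5,6,4,1,0,3], ![false,false,false,true,true,true,true]⟩,
  ⟨![2,5,6,4,1,0,3], ![false,true,true,false,true,true,false]⟩,
  ⟨![2,5,6,4,1,0,3], ![false,true,true,true,false,false,true]⟩,
  ⟨![2,5,6,4,1,0,3], ![true,false,true,false,true,false,true]⟩,
  ⟨![2,5,6,4,1,0,3], ![true,false,true,true,false,true,false]⟩,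
  ⟨![2,5,6,4,1,0,3], ![true,true,false,false,false,true,true]⟩,
  ⟨![2,5,6,4,1,0,3], ![true,true,false,true,true,false,false]⟩,
  ⟨![3,2,4,5,0,6,1], ![false,false,false,false,false,false,false]⟩,
  ⟨![3,2,4,5,0,6,1], ![false,false,false,true,true,true,true]⟩,
  ⟨![3,2,4,5,0,6,1], ![false,true,true,false,true,true,false]⟩,
  ⟨![3,2,4,5,0,6,1], ![false,true,true,true,false,false,true]⟩,
  ⟨![3,2,4,5,0,6,1], ![true,false,true,false,true,false,true]⟩,
  ⟨![3,2,4,5,0,6,1], ![true,false,true,true,false,true,false]⟩,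
  ⟨![3,2,4,5,0,6,1], ![true,true,false,false,false,true,true]⟩,
  ⟨![3,2,4,5,0,6,1], ![true,true,false,true,true,false,false]⟩,
  ⟨![3,5,1,6,4,2,0], ![false,false,false,false,false,false,false]⟩,
  ⟨![3,5,1,6,4,2,0], ![false,false,false,true,true,true,true]⟩,
  ⟨![3,5,1,6,4,2,0], ![false,true,true,false,true,true,false]⟩,
  ⟨![3,5,1,6,4,2,0], ![false,true,true,true,false,false,true]⟩]

def L3 : List M7 := [
  ⟨![3,5,1,6,4,2,0], ![true,false,true,false,true,false,true]⟩,
  ⟨![3,5,1,6,4,2,0], ![true,false,true,true,false,true,false]⟩,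
  ⟨![3,5,1,6,4,2,0], ![true,true,false,false,false,true,true]⟩,
  ⟨![3,5,1,6,4,2,0], ![true,true,false,true,true,false,false]⟩,
  ⟨![3,6,0,2,1,5,4], ![false,false,false,false,false,false,false]⟩,
  ⟨![3,6,0,2,1,5,4], ![false,false,false,true,true,true,true]⟩,
  ⟨![3,6,0,2,1,5,4], ![false,true,true,false,true,true,false]⟩,
  ⟨![3,6,0,2,1,5,4], ![false,true,true,true,false,false,true]⟩,
  ⟨![3,6,0,2,1,5,4], ![true,false,true,false,true,false,true]⟩,
  ⟨![3,6,0,2,1,5,4], ![true,false,true,true,false,true,false]⟩,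
  ⟨![3,6,0,2,1,5,4], ![true,true,false,false,false,true,true]⟩,
  ⟨![3,6,0,2,1,5,4], ![true,true,false,true,true,false,false]⟩,
  ⟨![4,0,5,3,1,6,2], ![false,false,false,false,false,false,false]⟩,
  ⟨![4,0,5,3,1,6,2], ![false,false,false,true,true,true,true]⟩,
  ⟨![4,0,5,3,1,6,2], ![false,true,true,false,true,true,false]⟩,
  ⟨![4,0,5,3,1,6,2], ![false,true,true,true,false,false,true]⟩,
  ⟨![4,0,5,3,1,6,2], ![true,false,true,false,true,false,true]⟩,
  ⟨![4,0,5,3,1,6,2], ![true,false,true,true,false,true,false]⟩,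
  ⟨![4,0,5,3,1,6,2], ![true,true,false,false,false,true,true]⟩,
  ⟨![4,0,5,3,1,6,2], ![true,true,false,true,true,false,false]⟩,
  ⟨![4,3,2,6,5,0,1], ![false,false,false,false,false,false,false]⟩,
  ⟨![4,3,2,6,5,0,1], ![false,false,false,true,true,true,true]⟩,
  ⟨![4,3,2,6,5,0,1], ![false,true,true,false,true,true,false]⟩,
  ⟨![4,3,2,6,5,0,1], ![false,true,true,true,false,false,true]⟩,
  ⟨![4,3,2,6,5,0,1], ![true,false,true,false,true,false,true]⟩,
  ⟨![4,3,2,6,5,0,1], ![true,false,true,true,false,true,false]⟩,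
  ⟨![4,3,2,6,5,0,1], ![true,true,false,false,false,true,true]⟩,
  ⟨![4,3,2,6,5,0,1], ![true,true,false,true,true,false,false]⟩,
  ⟨![4,6,1,0,2,3,5], ![false,false,false,false,false,false,false]⟩,
  ⟨![4,6,1,0,2,3,5], ![false,false,false,true,true,true,true]⟩,
  ⟨![4,6,1,0,2,3,5], ![false,true,true,false,true,true,false]⟩,
  ⟨![4,6,1,0,2,3,5], ![false,true,true,true,false,false,true]⟩,
  ⟨![4,6,1,0,2,3,5], ![true,false,true,false,true,false,true]⟩,
  ⟨![4,6,1,0,2,3,5], ![true,false,true,true,false,true,false]⟩,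
  ⟨![4,6,1,0,2,3,5], ![true,true,false,false,false,true,true]⟩,
  ⟨![4,6,1,0,2,3,5], ![true,true,false,true,true,false,false]⟩,
  ⟨![5,1,3,4,2,6,0], ![false,false,false,false,false,false,false]⟩,
  ⟨![5,1,3,4,2,6,0], ![false,false,false,true,true,true,true]⟩,
  ⟨![5,1,3,4,2,6,0], ![false,true,true,false,true,true,false]⟩,
  ⟨![5,1,3,4,2,6,0], ![false,true,true,true,false,false,true]⟩,
  ⟨![5,1,3,4,2,6,0], ![true,false,true,false,true,false,true]⟩,
  ⟨![5,1,3,4,2,6,0], ![true,false,true,true,false,true,false]⟩]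

def L4 : List M7 := [
  ⟨![5,1,3,4,2,6,0], ![true,true,false,false,false,true,true]⟩,
  ⟨![5,1,3,4,2,6,0], ![true,true,false,true,true,false,false]⟩,
  ⟨![5,4,0,6,3,1,2], ![false,false,false,false,false,false,false]⟩,
  ⟨![5,4,0,6,3,1,2], ![false,false,false,true,true,true,true]⟩,
  ⟨![5,4,0,6,3,1,2], ![false,true,true,false,true,true,false]⟩,
  ⟨![5,4,0,6,3,1,2], ![false,true,true,true,false,false,true]⟩,
  ⟨![5,4,0,6,3,1,2], ![true,false,true,false,true,false,true]⟩,
  ⟨![5,4,0,6,3,1,2], ![true,false,true,true,false,true,false]⟩,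
  ⟨![5,4,0,6,3,1,2], ![true,true,false,false,false,true,true]⟩,
  ⟨![5,4,0,6,3,1,2], ![true,true,false,true,true,false,false]⟩,
  ⟨![5,6,2,1,0,4,3], ![false,false,false,false,false,false,false]⟩,
  ⟨![5,6,2,1,0,4,3], ![false,false,false,true,true,true,true]⟩,
  ⟨![5,6,2,1,0,4,3], ![false,true,true,false,true,true,false]⟩,
  ⟨![5,6,2,1,0,4,3], ![false,true,true,true,false,false,true]⟩,
  ⟨![5,6,2,1,0,4,3], ![true,false,true,false,true,false,true]⟩,
  ⟨![5,6,2,1,0,4,3], ![true,false,true,true,false,true,false]⟩,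
  ⟨![5,6,2,1,0,4,3], ![true,true,false,false,false,true,true]⟩,
  ⟨![5,6,2,1,0,4,3], ![true,true,false,true,true,false,false]⟩,
  ⟨![6,0,3,1,5,2,4], ![false,false,false,false,false,false,false]⟩,
  ⟨![6,0,3,1,5,2,4], ![false,false,false,true,true,true,true]⟩,
  ⟨![6,0,3,1,5,2,4], ![false,true,true,false,true,true,false]⟩,
  ⟨![6,0,3,1,5,2,4], ![false,true,true,true,false,false,true]⟩,
  ⟨![6,0,3,1,5,2,4], ![true,false,true,false,true,false,true]⟩,
  ⟨![6,0,3,1,5,2,4], ![true,false,true,true,false,true,false]⟩,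
  ⟨![6,0,3,1,5,2,4], ![true,true,false,false,false,true,true]⟩,
  ⟨![6,0,3,1,5,2,4], ![true,true,false,true,true,false,false]⟩,
  ⟨![6,1,4,2,3,0,5], ![false,false,false,false,false,false,false]⟩,
  ⟨![6,1,4,2,3,0,5], ![false,false,false,true,true,true,true]⟩,
  ⟨![6,1,4,2,3,0,5], ![false,true,true,false,true,true,false]⟩,
  ⟨![6,1,4,2,3,0,5], ![false,true,true,true,false,false,true]⟩,
  ⟨![6,1,4,2,3,0,5], ![true,false,true,false,true,false,true]⟩,
  ⟨![6,1,4,2,3,0,5], ![true,false,true,true,false,true,false]⟩,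
  ⟨![6,1,4,2,3,0,5], ![true,true,false,false,false,true,true]⟩,
  ⟨![6,1,4,2,3,0,5], ![true,true,false,true,true,false,false]⟩,
  ⟨![6,2,5,0,4,1,3], ![false,false,false,false,false,false,false]⟩,
  ⟨![6,2,5,0,4,1,3], ![false,false,false,true,true,true,true]⟩,
  ⟨![6,2,5,0,4,1,3], ![false,true,true,false,true,true,false]⟩,
  ⟨![6,2,5,0,4,1,3], ![false,true,true,true,false,false,true]⟩,
  ⟨![6,2,5,0,4,1,3], ![true,false,true,false,true,false,true]⟩,
  ⟨![6,2,5,0,4,1,3], ![true,false,true,true,false,true,false]⟩,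
  ⟨![6,2,5,0,4,1,3], ![true,true,false,false,false,true,true]⟩,
  ⟨![6,2,5,0,4,1,3], ![true,true,false,true,true,false,false]⟩]

def L : List M7 := L1 ++ L2 ++ L3 ++ L4
def idxa1 : List Nat := [32, 33, 34, 35, 36, 37, 38, 39, 24, 25, 26, 27, 28, 29, 30, 31, 40, 41, 42, 43, 44, 45, 46, 47, 80, 81, 82, 83, 84, 85, 86, 87, 72, 73, 74, 75, 76, 77, 78, 79, 88, 89, 90, 91, 92, 93, 94, 95, 120, 121, 122, 123, 124, 125, 126, 127, 136, 137, 138, 139, 140, 141, 142, 143, 128, 129, 130, 131, 132, 133, 134, 135, 64, 65, 66, 67, 68, 69, 70, 71, 56, 57, 58, 59]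
def idxa2 : List Nat := [60, 61, 62, 63, 48, 49, 50, 51, 52, 53, 54, 55, 152, 153, 154, 155, 156, 157, 158, 159, 160, 161, 162, 163, 164, 165, 166, 167, 144, 145, 146, 147, 148, 149, 150, 151, 104, 105, 106, 107, 108, 109, 110, 111, 112, 113, 114, 115, 116, 117, 118, 119, 96, 97, 98, 99, 100, 101, 102, 103, 0, 1, 2, 3, 4, 5, 6, 7, 8, 9, 10, 11, 12, 13, 14, 15, 16, 17, 18, 19, 20, 21, 22, 23]
def idxa : List Nat := idxa1 ++ idxa2
def idxai1 : List Nat := [144, 145, 146, 147, 148, 149, 150, 151, 152, 153, 154, 155, 156, 157, 158, 159, 160, 161, 162, 163, 164, 165, 166, 167, 8, 9, 10, 11, 12, 13, 14, 15, 0, 1, 2, 3, 4, 5, 6, 7, 16, 17, 18, 19, 20, 21, 22, 23, 88, 89, 90, 91, 92, 93, 94, 95, 80, 81, 82, 83, 84, 85, 86, 87, 72, 73, 74, 75, 76, 77, 78, 79, 32, 33, 34, 35, 36, 37, 38, 39, 24, 25, 26, 27]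
def idxai2 : List Nat := [28, 29, 30, 31, 40, 41, 42, 43, 44, 45, 46, 47, 136, 137, 138, 139, 140, 141, 142, 143, 120, 121, 122, 123, 124, 125, 126, 127, 128, 129, 130, 131, 132, 133, 134, 135, 48, 49, 50, 51, 52, 53, 54, 55, 64, 65, 66, 67, 68, 69, 70, 71, 56, 57, 58, 59, 60, 61, 62, 63, 112, 113, 114, 115, 116, 117, 118, 119, 96, 97, 98, 99, 100, 101, 102, 103, 104, 105, 106, 107, 108, 109, 110, 111]
def idxai : List Nat := idxai1 ++ idxai2
def idxb1 : List Nat := [8, 9, 10, 11, 12, 13, 14, 15, 16, 17, 18, 19, 20, 21, 22, 23, 0, 1, 2, 3, 4, 5, 6, 7, 88, 89, 90, 91, 92, 93, 94, 95, 80, 81, 82, 83, 84, 85, 86, 87, 72, 73, 74, 75, 76, 77, 78, 79, 144, 145, 146, 147, 148, 149, 150, 151, 160, 161, 162, 163, 164, 165, 166, 167, 152, 153, 154, 155, 156, 157, 158, 159, 136, 137, 138, 139, 140, 141, 142, 143, 120, 121, 122, 123]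
def idxb2 : List Nat := [124, 125, 126, 127, 128, 129, 130, 131, 132, 133, 134, 135, 48, 49, 50, 51, 52, 53, 54, 55, 64, 65, 66, 67, 68, 69, 70, 71, 56, 57, 58, 59, 60, 61, 62, 63, 32, 33, 34, 35, 36, 37, 38, 39, 24, 25, 26, 27, 28, 29, 30, 31, 40, 41, 42, 43, 44, 45, 46, 47, 96, 97, 98, 99, 100, 101, 102, 103, 104, 105, 106, 107, 108, 109, 110, 111, 112, 113, 114, 115, 116, 117, 118, 119]
def idxb : List Nat := idxb1 ++ idxb2
def idxbi1 : List Nat := [16, 17, 18, 19, 20, 21, 22, 23, 0, 1, 2, 3, 4, 5, 6, 7, 8, 9, 10, 11, 12, 13, 14, 15, 128, 129, 130, 131, 132, 133, 134, 135, 120, 121, 122, 123, 124, 125, 126, 127, 136, 137, 138, 139, 140, 141, 142, 143, 96, 97, 98, 99, 100, 101, 102, 103, 112, 113, 114, 115, 116, 117, 118, 119, 104, 105, 106, 107, 108, 109, 110, 111, 40, 41, 42, 43, 44, 45, 46, 47, 32, 33, 34, 35]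
def idxbi2 : List Nat := [36, 37, 38, 39, 24, 25, 26, 27, 28, 29, 30, 31, 144, 145, 146, 147, 148, 149, 150, 151, 152, 153, 154, 155, 156, 157, 158, 159, 160, 161, 162, 163, 164, 165, 166, 167, 80, 81, 82, 83, 84, 85, 86, 87, 88, 89, 90, 91, 92, 93, 94, 95, 72, 73, 74, 75, 76, 77, 78, 79, 48, 49, 50, 51, 52, 53, 54, 55, 64, 65, 66, 67, 68, 69, 70, 71, 56, 57, 58, 59, 60, 61, 62, 63]
def idxbi : List Nat := idxbi1 ++ idxbi2
def idxn1 : List Nat := [1, 0, 3, 2, 5, 4, 7, 6, 11, 10, 9, 8, 15, 14, 13, 12, 18, 19, 16, 17, 22, 23, 20, 21, 25, 24, 27, 26, 29, 28, 31, 30, 34, 35, 32, 33, 38, 39, 36, 37, 43, 42, 41, 40, 47, 46, 45, 44, 49, 48, 51, 50, 53, 52, 55, 54, 58, 59, 56, 57, 62, 63, 60, 61, 67, 66, 65, 64, 71, 70, 69, 68, 77, 76, 79, 78, 73, 72, 75, 74, 87, 86, 85, 84]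
def idxn2 : List Nat := [83, 82, 81, 80, 94, 95, 92, 93, 90, 91, 88, 89, 101, 100, 103, 102, 97, 96, 99, 98, 111, 110, 109, 108, 107, 106, 105, 104, 118, 119, 116, 117, 114, 115, 112, 113, 125, 124, 127, 126, 121, 120, 123, 122, 135, 134, 133, 132, 131, 130, 129, 128, 142, 143, 140, 141, 138, 139, 136, 137, 148, 149, 150, 151, 144, 145, 146, 147, 156, 157, 158, 159, 152, 153, 154, 155, 164, 165, 166, 167, 160, 161, 162, 163]
def idxn : List Nat := idxn1 ++ idxn2

def ua : M7ˣ := ⟨⟨![1,3,5,2,6,4,0], ![false,false,false,false,false,false,false]⟩,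
  ⟨![6,0,3,1,5,2,4], ![false,false,false,false,false,false,false]⟩, by decide, by decide⟩
def ub : M7ˣ := ⟨⟨![0,3,6,5,2,1,4], ![false,false,false,false,false,false,false]⟩,
  ⟨![0,5,4,1,6,3,2], ![false,false,false,false,false,false,false]⟩, by decide, by decide⟩
def un : M7ˣ := ⟨⟨![0,1,2,3,4,5,6], ![false,false,false,true,true,true,true]⟩,
  ⟨![0,1,2,3,4,5,6], ![false,false,false,true,true,true,true]⟩, by decide, by decide⟩

def v2 : M7ˣ := ⟨⟨![0,1,2,3,4,5,6], ![false,true,true,false,true,true,false]⟩,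
  ⟨![0,1,2,3,4,5,6], ![false,true,true,false,true,true,false]⟩, by decide, by decide⟩
def v3 : M7ˣ := ⟨⟨![0,1,2,3,4,5,6], ![false,true,true,true,false,false,true]⟩,
  ⟨![0,1,2,3,4,5,6], ![false,true,true,true,false,false,true]⟩, by decide, by decide⟩
def v4 : M7ˣ := ⟨⟨![0,1,2,3,4,5,6], ![true,false,true,true,false,true,false]⟩,
  ⟨![0,1,2,3,4,5,6], ![true,false,true,true,false,true,false]⟩, by decide, by decide⟩
def v5 : M7ˣ := ⟨⟨![0,1,2,3,4,5,6], ![true,true,false,false,false,true,true]⟩,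
  ⟨![0,1,2,3,4,5,6], ![true,true,false,false,false,true,true]⟩, by decide, by decide⟩
def v6 : M7ˣ := ⟨⟨![0,1,2,3,4,5,6], ![true,true,false,true,true,false,false]⟩,
  ⟨![0,1,2,3,4,5,6], ![true,true,false,true,true,false,false]⟩, by decide, by decide⟩
def v7 : M7ˣ := ⟨⟨![0,1,2,3,4,5,6], ![true,false,true,false,true,false,true]⟩,
  ⟨![0,1,2,3,4,5,6], ![true,false,true,false,true,false,true]⟩, by decide, by decide⟩

set_option maxRecDepth 1000000
set_option maxHeartbeats 1000000

lemma hψa : ψ ua = permGL α := by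
  apply Units.ext
  show mmat ua.val = (α⁻¹).permMatrix ℚ
  decide

lemma hψb : ψ ub = permGL β := by
  apply Units.ext
  show mmat ub.val = (β⁻¹).permMatrix ℚ
  decide

lemma hψn : ψ un = N₁ := by
  apply Units.ext
  show mmat un.val = Matrix.diagonal ![1, 1, 1, -1, -1, -1, -1]
  decide

lemma hψv2 : ψ v2 = N₂ := by
  apply Units.ext
  show mmat v2.val = Matrix.diagonal ![1, -1, -1, 1, -1, -1, 1]
  decide

lemma hψv7 : ψ v7 = N₇ := by
  apply Units.ext
  show mmat v7.val = Matrix.diagonal ![-1, 1, -1, 1, -1, 1, -1]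
  decide

lemma hL1 : (1 : M7) ∈ L := by decide

lemma mem_of_map_eq {g : M7} {idx : List ℕ}
    (h : L.map (fun m => g * m) = idx.map (fun i => L.getD i 1)) :
    ∀ m ∈ L, g * m ∈ L := by
  intro m hm
  have h1 : g * m ∈ L.map (fun m => g * m) := List.mem_map_of_mem hm
  rw [h] at h1
  obtain ⟨i, -, heq⟩ := List.mem_map.mp h1
  rw [← heq]
  by_cases hi : i < L.length
  · rw [List.getD_eq_getElem _ _ hi]
    exact List.getElem_mem _
  · rw [List.getD_eq_default _ _ (le_of_not_gt hi)]
    exact hL1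

lemma hLa : ∀ m ∈ L, ua.val * m ∈ L := mem_of_map_eq (idx := idxa) (by decide)
lemma hLai : ∀ m ∈ L, ua⁻¹.val * m ∈ L := mem_of_map_eq (idx := idxai) (by decide)
lemma hLb : ∀ m ∈ L, ub.val * m ∈ L := mem_of_map_eq (idx := idxb) (by decide)
lemma hLbi : ∀ m ∈ L, ub⁻¹.val * m ∈ L := mem_of_map_eq (idx := idxbi) (by decide)
lemma hLn : ∀ m ∈ L, un.val * m ∈ L := mem_of_map_eq (idx := idxn) (by decide)
lemma hLni : ∀ m ∈ L, un⁻¹.val * m ∈ L := mem_of_map_eq (idx := idxn) (by decide)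

def H : Subgroup M7ˣ := Subgroup.closure {ua, ub, un}

lemma val_mem_L_of_mem_H : ∀ g ∈ H, (g : M7ˣ).val ∈ L := by
  have key : ∀ x ∈ H, (∀ m ∈ L, (x : M7ˣ).val * m ∈ L) ∧ (∀ m ∈ L, (x⁻¹ : M7ˣ).val * m ∈ L) := by
    intro x hx
    refine Subgroup.closure_induction ?_ ?_ ?_ ?_ hx
    · intro y hy
      simp only [Set.mem_insert_iff, Set.mem_singleton_iff] at hy
      rcases hy with rfl | rfl | rfl
      · exact ⟨hLa, hLai⟩
      · exact ⟨hLb, hLbi⟩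
      · exact ⟨hLn, hLni⟩
    · constructor <;> · intro m hm; simpa using hm
    · intro x y _ _ hxp hyp
      constructor
      · intro m hm
        rw [Units.val_mul, mul_assoc]
        exact hxp.1 _ (hyp.1 _ hm)
      · intro m hm
        rw [_root_.mul_inv_rev, Units.val_mul, mul_assoc]
        exact hyp.2 _ (hxp.2 _ hm)
    · intro x _ hxp
      refine ⟨hxp.2, ?_⟩
      rw [inv_inv]
      exact hxp.1
  intro g hg
  have := (key g hg).1 1 hL1
  simpa using this

lemma haH : ua ∈ H := Subgroup.subset_closure (by simp)
lemma hbH : ub ∈ H := Subgroup.subset_closure (by simp)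
lemma hnH : un ∈ H := Subgroup.subset_closure (by simp)

lemma hHsub : (H : Set M7ˣ) ⊆ Units.val ⁻¹' {m : M7 | m ∈ L} :=
  fun g hg => val_mem_L_of_mem_H g hg

lemma hSfin : (Units.val ⁻¹' {m : M7 | m ∈ L} : Set M7ˣ).Finite :=
  Set.Finite.preimage Units.val_injective.injOn L.finite_toSet

lemma hHfin : (H : Set M7ˣ).Finite := hSfin.subset hHsub

instance : Finite H := hHfin.to_subtype

lemma cardH_le : Nat.card H ≤ 168 := by
  have h1 : Nat.card H = (H : Set M7ˣ).ncard := rfl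
  have h2 : (H : Set M7ˣ).ncard ≤ (Units.val ⁻¹' {m : M7 | m ∈ L} : Set M7ˣ).ncard :=
    Set.ncard_le_ncard hHsub hSfin
  have h3 : (Units.val ⁻¹' {m : M7 | m ∈ L} : Set M7ˣ).ncard
      = (Units.val '' (Units.val ⁻¹' {m : M7 | m ∈ L}) : Set M7).ncard :=
    (Set.ncard_image_of_injective _ Units.val_injective).symm
  have h4 : (Units.val '' (Units.val ⁻¹' {m : M7 | m ∈ L}) : Set M7).ncard
      ≤ ({m : M7 | m ∈ L} : Set M7).ncard :=
    Set.ncard_le_ncard (Set.image_preimage_subset _ _) L.finite_toSet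
  have h5 : ({m : M7 | m ∈ L} : Set M7).ncard ≤ 168 := by
    rw [← List.coe_toFinset, Set.ncard_coe_finset]
    calc L.toFinset.card ≤ L.length := L.toFinset_card_le
      _ = 168 := by rfl
  omega

lemma hua7 : ua ^ 7 = 1 := by
  apply Units.ext
  show (ua ^ 7).val = (1 : M7)
  decide

lemma hub3 : ub ^ 3 = 1 := by
  apply Units.ext
  show (ub ^ 3).val = (1 : M7)
  decide

lemma hua_ne : ua ≠ 1 := by
  intro h
  have := congrArg Units.val h
  revert this
  decide

lemma hub_ne : ub ≠ 1 := by
  intro h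
  have := congrArg Units.val h
  revert this
  decide

lemma h7dvd : 7 ∣ Nat.card H := by
  haveI : Fact (Nat.Prime 7) := ⟨by norm_num⟩
  have h1 : orderOf ua = 7 := orderOf_eq_prime hua7 hua_ne
  have h2 : orderOf (⟨ua, haH⟩ : H) = 7 := by
    rw [← h1]
    simpa using orderOf_injective H.subtype (Subgroup.subtype_injective H) ⟨ua, haH⟩
  rw [← h2]
  exact orderOf_dvd_natCard _

lemma h3dvd : 3 ∣ Nat.card H := by
  haveI : Fact (Nat.Prime 3) := ⟨by norm_num⟩
  have h1 : orderOf ub = 3 := orderOf_eq_prime hub3 hub_ne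
  have h2 : orderOf (⟨ub, hbH⟩ : H) = 3 := by
    rw [← h1]
    simpa using orderOf_injective H.subtype (Subgroup.subtype_injective H) ⟨ub, hbH⟩
  rw [← h2]
  exact orderOf_dvd_natCard _

def EF : Finset M7ˣ := {1, un, v2, v3, v4, v5, v6, v7}

def E' : Subgroup M7ˣ where
  carrier := ↑EF
  one_mem' := by
    refine Finset.mem_coe.mpr ?_
    decide
  mul_mem' := by
    intro x y hx hy
    refine Finset.mem_coe.mpr ?_
    have h : ∀ a ∈ EF, ∀ b ∈ EF, a * b ∈ EF := by decide
    exact h x (Finset.mem_coe.mp hx) y (Finset.mem_coe.mp hy)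
  inv_mem' := by
    intro x hx
    refine Finset.mem_coe.mpr ?_
    have h : ∀ a ∈ EF, a⁻¹ ∈ EF := by decide
    exact h x (Finset.mem_coe.mp hx)

lemma hv2w : v2 = ua⁻¹ * un * ua := by apply Units.ext; decide
lemma hv7w : v7 = ua * un * ua⁻¹ := by apply Units.ext; decide
lemma hv3w : v3 = un * v2 := by apply Units.ext; decide
lemma hv4w : v4 = un * v7 := by apply Units.ext; decide
lemma hv5w : v5 = v2 * v7 := by apply Units.ext; decide
lemma hv6w : v6 = un * v2 * v7 := by apply Units.ext; decide

lemma hv2H : v2 ∈ H := by rw [hv2w]; exact mul_mem (mul_mem (inv_mem haH) hnH) haH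
lemma hv7H : v7 ∈ H := by rw [hv7w]; exact mul_mem (mul_mem haH hnH) (inv_mem haH)
lemma hv3H : v3 ∈ H := by rw [hv3w]; exact mul_mem hnH hv2H
lemma hv4H : v4 ∈ H := by rw [hv4w]; exact mul_mem hnH hv7H
lemma hv5H : v5 ∈ H := by rw [hv5w]; exact mul_mem hv2H hv7H
lemma hv6H : v6 ∈ H := by rw [hv6w]; exact mul_mem (mul_mem hnH hv2H) hv7H

lemma hE'mem_iff {x : M7ˣ} : x ∈ E' ↔ x ∈ EF := Iff.rfl

lemma hE'le : E' ≤ H := by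
  intro x hx
  have hx' : x ∈ EF := hE'mem_iff.mp hx
  simp only [EF, Finset.mem_insert, Finset.mem_singleton] at hx'
  rcases hx' with rfl | rfl | rfl | rfl | rfl | rfl | rfl | rfl
  · exact one_mem H
  · exact hnH
  · exact hv2H
  · exact hv3H
  · exact hv4H
  · exact hv5H
  · exact hv6H
  · exact hv7H

lemma cardE' : Nat.card E' = 8 := by
  have h1 : Nat.card E' = ((EF : Set M7ˣ)).ncard := rfl
  rw [h1, Set.ncard_coe_finset]
  decide

lemma conj_mem' : ∀ g ∈ H, ∀ e ∈ E', g * e * g⁻¹ ∈ E' := by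
  have key : ∀ x ∈ H, (∀ e ∈ EF, x * e * x⁻¹ ∈ EF) ∧ (∀ e ∈ EF, x⁻¹ * e * x ∈ EF) := by
    intro x hx
    refine Subgroup.closure_induction ?_ ?_ ?_ ?_ hx
    · intro y hy
      simp only [Set.mem_insert_iff, Set.mem_singleton_iff] at hy
      rcases hy with rfl | rfl | rfl
      · constructor <;> decide
      · constructor <;> decide
      · constructor <;> decide
    · constructor <;> · intro e he; simpa using he
    · intro x y _ _ hxp hyp
      constructor
      · intro e he
        have h1 : x * y * e * (x * y)⁻¹ = x * (y * e * y⁻¹) * x⁻¹ := by group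
        rw [h1]
        exact hxp.1 _ (hyp.1 _ he)
      · intro e he
        have h1 : (x * y)⁻¹ * e * (x * y) = y⁻¹ * (x⁻¹ * e * x) * y := by group
        rw [h1]
        exact hyp.2 _ (hxp.2 _ he)
    · intro x _ hxp
      refine ⟨hxp.2, ?_⟩
      intro e he
      have h1 : x⁻¹⁻¹ * e * x⁻¹ = x * e * x⁻¹ := by rw [inv_inv]
      rw [h1]
      exact hxp.1 _ he
  intro g hg e he
  exact hE'mem_iff.mpr ((key g hg).1 e (hE'mem_iff.mp he))

def EGL : Subgroup (GL (Fin 7) ℚ) := Subgroup.map ψ E'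

lemma hG3map : G3 = Subgroup.map ψ H := by
  show Subgroup.closure {permGL α, permGL β, N₁} = Subgroup.map ψ (Subgroup.closure {ua, ub, un})
  rw [MonoidHom.map_closure]
  congr 1
  rw [Set.image_insert_eq, Set.image_insert_eq, Set.image_singleton, hψa, hψb, hψn]

lemma cardG3_eq : Nat.card G3 = Nat.card H := by
  rw [hG3map]
  exact (Nat.card_congr (Subgroup.equivMapOfInjective H ψ ψ_injective).toEquiv).symm

lemma h8dvd : 8 ∣ Nat.card H := by
  rw [← cardE']
  exact Subgroup.card_dvd_of_le hE'le

lemma cardH : Nat.card H = 168 := by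
  have hpos : 0 < Nat.card H := Nat.card_pos
  have h21 : 21 ∣ Nat.card H :=
    (Nat.coprime_comm.mp (by norm_num)).mul_dvd_of_dvd_of_dvd h7dvd h3dvd
  have h168 : 168 ∣ Nat.card H := by
    have : (21 : ℕ).Coprime 8 := by norm_num
    have := this.mul_dvd_of_dvd_of_dvd h21 h8dvd
    exact this
  exact le_antisymm cardH_le (Nat.le_of_dvd hpos h168)

lemma cardG3 : Nat.card G3 = 168 := by rw [cardG3_eq, cardH]

lemma hEGLset : (EGL : Set (GL (Fin 7) ℚ)) = Eset := by
  show (ψ '' (E' : Set M7ˣ)) = Eset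
  have h1 : (E' : Set M7ˣ) = {1, un, v2, v3, v4, v5, v6, v7} := by
    show ((EF : Set M7ˣ)) = _
    simp [EF]
  rw [h1]
  simp only [Set.image_insert_eq, Set.image_singleton, _root_.map_one, hψn, hψv2, hψv7]
  have e3 : ψ v3 = N₃ := by rw [hv3w, _root_.map_mul, hψn, hψv2]; rfl
  have e4 : ψ v4 = N₄ := by rw [hv4w, _root_.map_mul, hψn, hψv7]; rfl
  have e5 : ψ v5 = N₅ := by rw [hv5w, _root_.map_mul, hψv2, hψv7]; rfl
  have e6 : ψ v6 = N₆ := by rw [hv6w, _root_.map_mul, _root_.map_mul, hψn, hψv2, hψv7]; rfl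
  rw [e3, e4, e5, e6]
  rfl

lemma hEGLle : EGL ≤ G3 := by
  rw [hG3map]
  exact Subgroup.map_mono hE'le

lemma cardEGL : Nat.card EGL = 8 := by
  show Nat.card (Subgroup.map ψ E') = 8
  rw [← Nat.card_congr (Subgroup.equivMapOfInjective E' ψ ψ_injective).toEquiv, cardE']

lemma hEGLnormal : (EGL.subgroupOf G3).Normal := by
  constructor
  intro n hn g
  rw [Subgroup.mem_subgroupOf] at hn ⊢
  have hgmem : (g : GL (Fin 7) ℚ) ∈ Subgroup.map ψ H := by rw [← hG3map]; exact g.2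
  obtain ⟨h, hh, hhv⟩ := hgmem
  obtain ⟨e, he, hev⟩ := hn
  have hcoe : ((g * n * g⁻¹ : G3) : GL (Fin 7) ℚ) = ψ (h * e * h⁻¹) := by
    push_cast
    rw [← hhv, ← hev, _root_.map_mul, _root_.map_mul, _root_.map_inv]
  rw [hcoe]
  exact ⟨h * e * h⁻¹, conj_mem' h hh e he, rfl⟩

lemma cardEsub : Nat.card (EGL.subgroupOf G3) = 8 := by
  rw [Nat.card_congr (Subgroup.subgroupOfEquivOfLe hEGLle).toEquiv, cardEGL]

lemma not_simple : ¬ IsSimpleGroup G3 := by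
  intro hs
  have h8 := cardEsub
  rcases hs.eq_bot_or_eq_top_of_normal (EGL.subgroupOf G3) hEGLnormal with h | h
  · rw [h, Subgroup.card_bot] at h8
    omega
  · rw [h, Subgroup.card_top, cardG3] at h8
    omega
abbrev SL7 : Type := Matrix.SpecialLinearGroup (Fin 2) (ZMod 7)

instance : DecidableEq SL7 := fun a b =>
  decidable_of_iff (a.val = b.val) Subtype.ext_iff.symm

def W₁ : SL7 := ⟨!![1,1;0,1], by decide⟩
def W₂ : SL7 := ⟨!![1,0;1,1], by decide⟩
def cc : SL7 := ⟨!![6,0;0,6], by decide⟩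

lemma hcc_center : cc ∈ Subgroup.center SL7 := by
  rw [Subgroup.mem_center_iff]
  intro g
  apply Subtype.ext
  have h6 : (cc : Matrix (Fin 2) (Fin 2) (ZMod 7))
      = (6 : ZMod 7) • (1 : Matrix (Fin 2) (Fin 2) (ZMod 7)) := by decide
  show (g : Matrix (Fin 2) (Fin 2) (ZMod 7)) * cc = (cc : Matrix (Fin 2) (Fin 2) (ZMod 7)) * g
  rw [h6, mul_smul_comm, smul_mul_assoc, mul_one, one_mul]

def As : Fin 8 → SL7 :=
  ![⟨!![0,1;6,0], by decide⟩, ⟨!![0,2;3,0], by decide⟩, ⟨!![0,3;2,0], by decide⟩,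
    ⟨!![1,1;5,6], by decide⟩, ⟨!![1,2;6,6], by decide⟩, ⟨!![1,3;4,6], by decide⟩,
    ⟨!![1,4;3,6], by decide⟩, ⟨!![1,6;2,6], by decide⟩]

lemma hAsq : ∀ i, As i * As i = cc := by decide

lemma hAnc : ∀ i, ¬ (W₁ * As i = As i * W₁ ∧ W₂ * As i = As i * W₂) := by decide

lemma hAne : ∀ i j : Fin 8, i ≠ j →
    ¬ (W₁ * ((As i)⁻¹ * As j) = ((As i)⁻¹ * As j) * W₁ ∧
       W₂ * ((As i)⁻¹ * As j) = ((As i)⁻¹ * As j) * W₂) := by decide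

lemma mk_ne {A B : SL7}
    (h : ¬ (W₁ * (A⁻¹ * B) = (A⁻¹ * B) * W₁ ∧ W₂ * (A⁻¹ * B) = (A⁻¹ * B) * W₂)) :
    (QuotientGroup.mk A : PSL₂7) ≠ QuotientGroup.mk B := by
  intro he
  have hz : A⁻¹ * B ∈ Subgroup.center SL7 := QuotientGroup.eq.mp he
  exact h ⟨Subgroup.mem_center_iff.mp hz W₁, Subgroup.mem_center_iff.mp hz W₂⟩

lemma mk_ne_one {A : SL7} (h : ¬ (W₁ * A = A * W₁ ∧ W₂ * A = A * W₂)) :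
    (QuotientGroup.mk A : PSL₂7) ≠ 1 := by
  intro he
  have hz : A ∈ Subgroup.center SL7 := (QuotientGroup.eq_one_iff A).mp he
  exact h ⟨Subgroup.mem_center_iff.mp hz W₁, Subgroup.mem_center_iff.mp hz W₂⟩

lemma gsq (i : Fin 8) : (QuotientGroup.mk (As i) : PSL₂7) * QuotientGroup.mk (As i) = 1 := by
  rw [← QuotientGroup.mk_mul, hAsq i]
  exact (QuotientGroup.eq_one_iff cc).mpr hcc_center

lemma not_iso : ¬ Nonempty (G3 ≃* PSL₂7) := by
  rintro ⟨e⟩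
  set N : Subgroup PSL₂7 := Subgroup.map e.toMonoidHom (EGL.subgroupOf G3) with hN
  haveI hNn : N.Normal := hEGLnormal.map e.toMonoidHom e.surjective
  have hcardN : Nat.card N = 8 := by
    rw [hN, ← Nat.card_congr
      (Subgroup.equivMapOfInjective (EGL.subgroupOf G3) e.toMonoidHom e.injective).toEquiv]
    exact cardEsub
  have hcardPSL : Nat.card PSL₂7 = 168 := by
    rw [← Nat.card_congr e.toEquiv]
    exact cardG3
  haveI : Finite PSL₂7 := Nat.finite_of_card_ne_zero (by rw [hcardPSL]; norm_num)
  have hq : Nat.card (PSL₂7 ⧸ N) = 21 := by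
    have hl := Subgroup.card_eq_card_quotient_mul_card_subgroup N
    rw [hcardPSL, hcardN] at hl
    omega
  have key : ∀ g : PSL₂7, g * g = 1 → g ∈ N := by
    intro g hg
    have h2 : (QuotientGroup.mk' N) g * (QuotientGroup.mk' N) g = 1 := by
      rw [← _root_.map_mul, hg, _root_.map_one]
    have hd2 : orderOf ((QuotientGroup.mk' N) g) ∣ 2 :=
      orderOf_dvd_of_pow_eq_one (by rw [pow_two]; exact h2)
    have hd21 : orderOf ((QuotientGroup.mk' N) g) ∣ 21 := hq ▸ orderOf_dvd_natCard _
    have h1 : orderOf ((QuotientGroup.mk' N) g) = 1 := by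
      have hgcd := Nat.dvd_gcd hd2 hd21
      rw [show Nat.gcd 2 21 = 1 from by norm_num] at hgcd
      exact Nat.dvd_one.mp hgcd
    have h2 := orderOf_eq_one_iff.mp h1
    exact (QuotientGroup.eq_one_iff g).mp h2
  have hmem : ∀ i : Fin 8, (QuotientGroup.mk (As i) : PSL₂7) ∈ N := fun i => key _ (gsq i)
  set f : Option (Fin 8) → N := fun o =>
    Option.rec ⟨1, N.one_mem⟩ (fun i => ⟨QuotientGroup.mk (As i), hmem i⟩) o with hf
  have hfinj : Function.Injective f := by
    intro i j hij
    have hv := congrArg Subtype.val hij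
    match i, j with
    | none, none => rfl
    | none, some j =>
        exact absurd hv.symm (mk_ne_one (hAnc j))
    | some i, none =>
        exact absurd hv (mk_ne_one (hAnc i))
    | some i, some j =>
        by_cases h : i = j
        · rw [h]
        · exact absurd hv (mk_ne (hAne i j h))
  have hle := Nat.card_le_card_of_injective f hfinj
  rw [Finite.card_option, Nat.card_eq_fintype_card, Fintype.card_fin, hcardN] at hle
  omega

theorem stmt3 :
    Nat.card G3 = 168 ∧
    (∃ E : Subgroup (GL (Fin 7) ℚ),
      (E : Set (GL (Fin 7) ℚ)) = Eset ∧ Nat.card E = 8 ∧ E ≤ G3 ∧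
      (E.subgroupOf G3).Normal) ∧
    ¬ IsSimpleGroup G3 ∧
    ¬ Nonempty (G3 ≃* PSL₂7) :=
  ⟨cardG3, ⟨EGL, hEGLset, cardEGL, hEGLle, hEGLnormal⟩, not_simple, not_iso⟩
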